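/- For u > 0, if (a_n) is a bounded sequence of nonnegative reals converging to 0 in density (i.e., there is a set E ⊂ ℕ of natural density 0 such that a_n → 0 along n ∉ E), then n^{-u} Σ_{i=1}^{n-1} a_i i^{u-1} → 0 as n → ∞. -/

import Mathlib

open scoped BigOperators
open Filter

/-- A set `E ⊆ ℕ` has natural density 0 if `(1/n)·|E ∩ {0,…,n-1}| → 0`. -/
def HasDensityZero (E : Set ℕ) : Prop :=
  Tendsto (fun n : ℕ =>
    (∑ k ∈ Finset.range n, Set.indicator E (fun _ => (1 : ℝ)) k) / n) atTop (nhds 0)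

-- Bernoulli consequence: for 0 ≤ u ≤ 1 and x ≥ 1, u * x^(u-1) ≤ x^u - (x-1)^u
lemma aux_bern (u x : ℝ) (hu0 : 0 ≤ u) (hu1 : u ≤ 1) (hx : 1 ≤ x) :
    u * x ^ (u - 1) ≤ x ^ u - (x - 1) ^ u := by
  have hx0 : (0:ℝ) < x := lt_of_lt_of_le one_pos hx
  have hs : (-1:ℝ) ≤ -(1/x) := by
    have : 1/x ≤ 1 := by
      rw [div_le_one hx0]; exact hx
    linarith
  have hb := rpow_one_add_le_one_add_mul_self hs hu0 hu1
  have hxu : (0:ℝ) < x ^ u := Real.rpow_pos_of_pos hx0 u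
  have h1 : (1 + -(1/x)) = (x - 1) / x := by field_simp; ring
  have h2 : x ^ u * ((x-1)/x) ^ u = (x-1) ^ u := by
    rw [← Real.mul_rpow hx0.le (div_nonneg (by linarith) hx0.le)]
    congr 1
    field_simp
  have h3 : x ^ u * (1/x) = x ^ (u - 1) := by
    rw [Real.rpow_sub hx0, Real.rpow_one]
    field_simp
  have := mul_le_mul_of_nonneg_left hb hxu.le
  rw [h1] at this
  rw [h2] at this
  nlinarith [this]

lemma aux_sum_rpow (u : ℝ) (hu : 0 < u) (m : ℕ) :
    ∑ i ∈ Finset.Icc 1 m, (i:ℝ) ^ (u - 1) ≤ (1 + 1/u) * (m:ℝ) ^ u := by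
  have hCu : (0:ℝ) ≤ (m:ℝ) ^ u := Real.rpow_nonneg (Nat.cast_nonneg m) u
  rcases le_or_gt u 1 with hu1 | hu1
  · -- telescoping
    have key : ∀ m : ℕ, ∑ i ∈ Finset.Icc 1 m, (i:ℝ) ^ (u - 1) ≤ (m:ℝ) ^ u / u := by
      intro m
      induction m with
      | zero => simp [Real.zero_rpow hu.ne']
      | succ k ih =>
        have hins : Finset.Icc 1 (k+1) = insert (k+1) (Finset.Icc 1 k) := by
          ext x
          simp only [Finset.mem_Icc, Finset.mem_insert]
          omega
        rw [hins, Finset.sum_insert (by simp)]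
        have hb := aux_bern u ((k:ℝ)+1) hu.le hu1 (by linarith [Nat.cast_nonneg (α := ℝ) k])
        have hcast : ((k+1:ℕ):ℝ) = (k:ℝ) + 1 := by push_cast; ring
        rw [hcast]
        have : ((k:ℝ)+1) ^ (u-1) ≤ (((k:ℝ)+1) ^ u - (k:ℝ) ^ u) / u := by
          rw [le_div_iff₀ hu]
          have heq : ((k:ℝ)+1) - 1 = (k:ℝ) := by ring
          nlinarith [hb, heq ▸ hb]
        calc ((k:ℝ)+1) ^ (u-1) + ∑ i ∈ Finset.Icc 1 k, (i:ℝ) ^ (u - 1)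
            ≤ (((k:ℝ)+1) ^ u - (k:ℝ) ^ u) / u + (k:ℝ) ^ u / u := by
              exact add_le_add this ih
          _ = ((k:ℝ)+1) ^ u / u := by ring
    calc ∑ i ∈ Finset.Icc 1 m, (i:ℝ) ^ (u - 1) ≤ (m:ℝ) ^ u / u := key m
      _ = (1/u) * (m:ℝ) ^ u := by ring
      _ ≤ (1 + 1/u) * (m:ℝ) ^ u := by nlinarith
  · -- u > 1 : each term ≤ m^(u-1)
    rcases Nat.eq_zero_or_pos m with rfl | hm
    · simp [Real.zero_rpow hu.ne']
    have hterm : ∀ i ∈ Finset.Icc 1 m, (i:ℝ) ^ (u-1) ≤ (m:ℝ) ^ (u-1) := by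
      intro i hi
      rw [Finset.mem_Icc] at hi
      exact Real.rpow_le_rpow (Nat.cast_nonneg i) (Nat.cast_le.mpr hi.2) (by linarith)
    calc ∑ i ∈ Finset.Icc 1 m, (i:ℝ) ^ (u - 1)
        ≤ ∑ _i ∈ Finset.Icc 1 m, (m:ℝ) ^ (u-1) := Finset.sum_le_sum hterm
      _ = (Finset.Icc 1 m).card * (m:ℝ) ^ (u-1) := by rw [Finset.sum_const, nsmul_eq_mul]
      _ ≤ (m:ℝ) * (m:ℝ) ^ (u-1) := by
          apply mul_le_mul_of_nonneg_right _ (Real.rpow_nonneg (Nat.cast_nonneg m) _)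
          simp [Nat.card_Icc]
      _ = (m:ℝ) ^ u := by
          have hm0 : (0:ℝ) < m := by exact_mod_cast hm
          calc (m:ℝ) * (m:ℝ) ^ (u-1) = (m:ℝ) ^ (1:ℝ) * (m:ℝ) ^ (u-1) := by
                rw [Real.rpow_one]
            _ = (m:ℝ) ^ (1 + (u-1)) := (Real.rpow_add hm0 _ _).symm
            _ = (m:ℝ) ^ u := by ring_nf
      _ ≤ (1 + 1/u) * (m:ℝ) ^ u := by
          have h01 : (0:ℝ) < 1/u := by positivity
          nlinarith


set_option maxHeartbeats 1000000 in
/-- For `u > 0`, if `(a_n)` is a bounded sequence of nonnegative reals converging to 0 in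
density (there is a density-0 set `E` with `a_n → 0` along `n ∉ E`), then
`n^{-u} Σ_{i=1}^{n-1} a_i i^{u-1} → 0`. -/
theorem stmt_11 (u : ℝ) (hu : 0 < u) (a : ℕ → ℝ)
    (ha_nonneg : ∀ n, 0 ≤ a n) (A : ℝ) (ha_bdd : ∀ n, a n ≤ A)
    (E : Set ℕ) (hE : HasDensityZero E)
    (hconv : Tendsto a (atTop ⊓ Filter.principal Eᶜ) (nhds 0)) :
    Tendsto (fun n : ℕ =>
        (n : ℝ) ^ (-u) * ∑ i ∈ Finset.Icc 1 (n - 1), a i * (i : ℝ) ^ (u - 1))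
      atTop (nhds 0) := by
  obtain ⟨C, hCdef⟩ : ∃ C : ℝ, C = 1 + 1/u := ⟨_, rfl⟩
  have hC0 : (0:ℝ) < C := by rw [hCdef]; positivity
  obtain ⟨A', hA'def⟩ : ∃ A' : ℝ, A' = max A 1 := ⟨_, rfl⟩
  have hA'1 : (1:ℝ) ≤ A' := by rw [hA'def]; exact le_max_right _ _
  have hA'0 : (0:ℝ) < A' := lt_of_lt_of_le one_pos hA'1
  have ha' : ∀ n, a n ≤ A' := fun n => le_trans (ha_bdd n) (hA'def ▸ le_max_left _ _)
  rw [Metric.tendsto_atTop]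
  intro ε hε
  obtain ⟨ε', hε'def⟩ : ∃ x : ℝ, x = ε / (3*C) := ⟨_, rfl⟩
  have hε'0 : 0 < ε' := by rw [hε'def]; positivity
  obtain ⟨t, htdef⟩ : ∃ x : ℝ, x = ε / (6 * A' * C) := ⟨_, rfl⟩
  have ht : 0 < t := by rw [htdef]; positivity
  obtain ⟨δ, hδdef⟩ : ∃ x : ℝ, x = min (t ^ (1/u)) 2⁻¹ := ⟨_, rfl⟩
  have hδ0 : 0 < δ := by
    rw [hδdef]; exact lt_min (Real.rpow_pos_of_pos ht _) (by norm_num)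
  have hδhalf : δ ≤ 2⁻¹ := by rw [hδdef]; exact min_le_right _ _
  have hδle : δ ≤ t ^ (1/u) := by rw [hδdef]; exact min_le_left _ _
  have hδu : A' * C * δ ^ u ≤ ε / 6 := by
    have h1 : δ ^ u ≤ t := by
      calc δ ^ u ≤ (t ^ (1/u)) ^ u :=
            Real.rpow_le_rpow hδ0.le hδle hu.le
        _ = t ^ ((1/u) * u) := (Real.rpow_mul ht.le _ _).symm
        _ = t := by rw [one_div, inv_mul_cancel₀ hu.ne', Real.rpow_one]
    have h2 : A' * C * δ ^ u ≤ A' * C * t :=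
      mul_le_mul_of_nonneg_left h1 (by positivity)
    have h3 : A' * C * t = ε / 6 := by
      rw [htdef]
      field_simp
    exact h2.trans h3.le
  obtain ⟨K, hKdef⟩ : ∃ x : ℝ, x = max 1 (δ ^ (u-1)) := ⟨_, rfl⟩
  have hK1 : (1:ℝ) ≤ K := by rw [hKdef]; exact le_max_left _ _
  have hKδ : δ ^ (u-1) ≤ K := by rw [hKdef]; exact le_max_right _ _
  have hK0 : (0:ℝ) < K := lt_of_lt_of_le one_pos hK1
  -- N1 from hconv
  have hconv2 : ∀ᶠ i in atTop, i ∈ Eᶜ → a i < ε' := by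
    have h := Metric.tendsto_nhds.mp hconv ε' hε'0
    rw [Filter.eventually_inf_principal] at h
    filter_upwards [h] with i hi hiE
    have h2 := hi hiE
    rwa [Real.dist_eq, sub_zero, abs_of_nonneg (ha_nonneg i)] at h2
  obtain ⟨N1, hN1⟩ := Filter.eventually_atTop.mp hconv2
  -- N2 from hE
  have hEK : 0 < ε / (3 * A' * K) := by positivity
  obtain ⟨N2, hN2⟩ := Metric.tendsto_atTop.mp hE (ε / (3*A'*K)) hEK
  refine ⟨max N2 (⌈(N1:ℝ)/δ⌉₊ + 2), fun n hn => ?_⟩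
  have hnN2 : N2 ≤ n := le_trans (le_max_left _ _) hn
  have hn2 : 2 ≤ n := by
    have := le_trans (le_max_right _ _) hn; omega
  have hn0 : (0:ℝ) < n := by
    have : (2:ℝ) ≤ n := by exact_mod_cast hn2
    linarith
  have hn2' : (2:ℝ) ≤ n := by exact_mod_cast hn2
  have hδn : (N1:ℝ) ≤ δ * n := by
    have h1 : ((⌈(N1:ℝ)/δ⌉₊:ℕ):ℝ) ≤ (n:ℝ) := by
      have h : (⌈(N1:ℝ)/δ⌉₊:ℕ) ≤ n := by
        have := le_trans (le_max_right _ _) hn; omega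
      exact_mod_cast h
    have h2 : (N1:ℝ)/δ ≤ (⌈(N1:ℝ)/δ⌉₊:ℕ) := Nat.le_ceil _
    have h3 : (N1:ℝ)/δ ≤ (n:ℝ) := le_trans h2 h1
    calc (N1:ℝ) = ((N1:ℝ)/δ) * δ := by field_simp
      _ ≤ (n:ℝ) * δ := mul_le_mul_of_nonneg_right h3 hδ0.le
      _ = δ * n := by ring
  obtain ⟨m, hmdef⟩ : ∃ x : ℕ, x = ⌊δ * (n:ℝ)⌋₊ := ⟨_, rfl⟩
  have hmδ : (m:ℝ) ≤ δ * n := by rw [hmdef]; exact Nat.floor_le (by positivity)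
  have hmlt : δ * n < (m:ℝ) + 1 := by rw [hmdef]; exact Nat.lt_floor_add_one _
  have hmn : m ≤ n - 1 := by
    have h1 : δ * n ≤ 2⁻¹ * n := mul_le_mul_of_nonneg_right hδhalf hn0.le
    have h2 : (m:ℝ) < n := by nlinarith
    have h3 : m < n := by exact_mod_cast h2
    omega
  rw [Real.dist_eq, sub_zero]
  have hnonneg : 0 ≤ (n:ℝ)^(-u) * ∑ i ∈ Finset.Icc 1 (n-1), a i * (i:ℝ)^(u-1) := by
    apply mul_nonneg (Real.rpow_nonneg hn0.le _)
    apply Finset.sum_nonneg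
    intro i _
    exact mul_nonneg (ha_nonneg i) (Real.rpow_nonneg (Nat.cast_nonneg i) _)
  rw [abs_of_nonneg hnonneg]
  have hsplit : Finset.Icc 1 (n-1) = Finset.Icc 1 m ∪ Finset.Ioc m (n-1) := by
    ext x
    simp only [Finset.mem_Icc, Finset.mem_Ioc, Finset.mem_union]
    omega
  have hdisj : Disjoint (Finset.Icc 1 m) (Finset.Ioc m (n-1)) := by
    rw [Finset.disjoint_left]
    intro x hx hx'
    rw [Finset.mem_Icc] at hx
    rw [Finset.mem_Ioc] at hx'
    omega
  -- Bound T1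
  have hT1 : ∑ i ∈ Finset.Icc 1 m, a i * (i:ℝ)^(u-1) ≤ A' * (C * (δ*(n:ℝ)) ^ u) := by
    have hmu : (m:ℝ) ^ u ≤ (δ*(n:ℝ)) ^ u :=
      Real.rpow_le_rpow (Nat.cast_nonneg m) hmδ hu.le
    calc ∑ i ∈ Finset.Icc 1 m, a i * (i:ℝ)^(u-1)
        ≤ ∑ i ∈ Finset.Icc 1 m, A' * (i:ℝ)^(u-1) :=
          Finset.sum_le_sum fun i _ =>
            mul_le_mul_of_nonneg_right (ha' i) (Real.rpow_nonneg (Nat.cast_nonneg i) _)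
      _ = A' * ∑ i ∈ Finset.Icc 1 m, (i:ℝ)^(u-1) := by rw [Finset.mul_sum]
      _ ≤ A' * (C * (m:ℝ)^u) :=
          mul_le_mul_of_nonneg_left (hCdef ▸ aux_sum_rpow u hu m) hA'0.le
      _ ≤ A' * (C * (δ*(n:ℝ))^u) := by
          apply mul_le_mul_of_nonneg_left _ hA'0.le
          exact mul_le_mul_of_nonneg_left hmu hC0.le
  -- Pointwise bound on Ioc m (n-1)
  have hptwise : ∀ i ∈ Finset.Ioc m (n-1),
      a i * (i:ℝ)^(u-1) ≤ ε' * (i:ℝ)^(u-1)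
        + A' * K * (n:ℝ)^(u-1) * Set.indicator E (fun _ => (1:ℝ)) i := by
    intro i hi
    rw [Finset.mem_Ioc] at hi
    have hmi : (m:ℝ) + 1 ≤ i := by exact_mod_cast hi.1
    have hiδ : δ * n < i := lt_of_lt_of_le hmlt hmi
    have hδn0 : (0:ℝ) < δ * n := by positivity
    have hi0 : (0:ℝ) < i := lt_trans hδn0 hiδ
    have hiN1 : N1 ≤ i := by
      have h : (N1:ℝ) < i := lt_of_le_of_lt hδn hiδ
      exact_mod_cast h.le
    have hiru : 0 ≤ (i:ℝ)^(u-1) := Real.rpow_nonneg hi0.le _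
    have hnru : 0 ≤ (n:ℝ)^(u-1) := Real.rpow_nonneg hn0.le _
    by_cases hiE : i ∈ E
    · have hind : Set.indicator E (fun _ => (1:ℝ)) i = 1 := Set.indicator_of_mem hiE _
      rw [hind, mul_one]
      have hK' : (i:ℝ)^(u-1) ≤ K * (n:ℝ)^(u-1) := by
        rcases le_or_gt 1 u with h1u | h1u
        · have hin : (i:ℝ) ≤ n := by
            have h : i ≤ n := le_trans hi.2 (Nat.sub_le n 1)
            exact_mod_cast h
          calc (i:ℝ)^(u-1) ≤ (n:ℝ)^(u-1) :=
                Real.rpow_le_rpow hi0.le hin (by linarith)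
            _ ≤ K * (n:ℝ)^(u-1) := by nlinarith
        · calc (i:ℝ)^(u-1) ≤ (δ*(n:ℝ))^(u-1) :=
                Real.rpow_le_rpow_of_nonpos hδn0 hiδ.le (by linarith)
            _ = δ^(u-1) * (n:ℝ)^(u-1) := Real.mul_rpow hδ0.le hn0.le
            _ ≤ K * (n:ℝ)^(u-1) :=
                mul_le_mul_of_nonneg_right hKδ hnru
      have h1 : a i * (i:ℝ)^(u-1) ≤ A' * (K * (n:ℝ)^(u-1)) :=
        mul_le_mul (ha' i) hK' hiru hA'0.le
      have h1' : a i * (i:ℝ)^(u-1) ≤ A' * K * (n:ℝ)^(u-1) := by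
        rw [mul_assoc]; exact h1
      linarith [mul_nonneg hε'0.le hiru]
    · have hind : Set.indicator E (fun _ => (1:ℝ)) i = 0 := Set.indicator_of_notMem hiE _
      rw [hind, mul_zero, add_zero]
      exact mul_le_mul_of_nonneg_right (le_of_lt (hN1 i hiN1 hiE)) hiru
  obtain ⟨S, hSdef⟩ : ∃ x : ℝ, x = ∑ k ∈ Finset.range n, Set.indicator E (fun _ => (1:ℝ)) k := ⟨_, rfl⟩
  have hS0 : 0 ≤ S := by
    rw [hSdef]
    exact Finset.sum_nonneg fun i _ => Set.indicator_nonneg (fun _ _ => zero_le_one) i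
  have hT2 : ∑ i ∈ Finset.Ioc m (n-1), a i * (i:ℝ)^(u-1)
      ≤ ε' * (C * (n:ℝ)^u) + A' * K * (n:ℝ)^(u-1) * S := by
    have hsub1 : Finset.Ioc m (n-1) ⊆ Finset.Icc 1 (n-1) := by
      rw [hsplit]; exact Finset.subset_union_right
    have hsub2 : Finset.Ioc m (n-1) ⊆ Finset.range n := by
      intro x hx
      rw [Finset.mem_Ioc] at hx
      rw [Finset.mem_range]
      omega
    calc ∑ i ∈ Finset.Ioc m (n-1), a i * (i:ℝ)^(u-1)
        ≤ ∑ i ∈ Finset.Ioc m (n-1), (ε' * (i:ℝ)^(u-1)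
            + A' * K * (n:ℝ)^(u-1) * Set.indicator E (fun _ => (1:ℝ)) i) :=
          Finset.sum_le_sum hptwise
      _ = ε' * ∑ i ∈ Finset.Ioc m (n-1), (i:ℝ)^(u-1)
          + A' * K * (n:ℝ)^(u-1) * ∑ i ∈ Finset.Ioc m (n-1),
              Set.indicator E (fun _ => (1:ℝ)) i := by
          rw [Finset.sum_add_distrib, Finset.mul_sum, Finset.mul_sum]
      _ ≤ ε' * ∑ i ∈ Finset.Icc 1 (n-1), (i:ℝ)^(u-1) + A' * K * (n:ℝ)^(u-1) * S := by
          rw [hSdef]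
          apply add_le_add
          · apply mul_le_mul_of_nonneg_left _ hε'0.le
            apply Finset.sum_le_sum_of_subset_of_nonneg hsub1
            intro i _ _
            exact Real.rpow_nonneg (Nat.cast_nonneg i) _
          · apply mul_le_mul_of_nonneg_left _ (by positivity)
            apply Finset.sum_le_sum_of_subset_of_nonneg hsub2
            intro i _ _
            exact Set.indicator_nonneg (fun _ _ => zero_le_one) i
      _ ≤ ε' * (C * (n:ℝ)^u) + A' * K * (n:ℝ)^(u-1) * S := by
          refine add_le_add ?_ le_rfl
          apply mul_le_mul_of_nonneg_left _ hε'0.le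
          calc ∑ i ∈ Finset.Icc 1 (n-1), (i:ℝ)^(u-1)
              ≤ C * ((n-1:ℕ):ℝ)^u := hCdef ▸ aux_sum_rpow u hu (n-1)
            _ ≤ C * (n:ℝ)^u := by
                apply mul_le_mul_of_nonneg_left _ hC0.le
                apply Real.rpow_le_rpow (Nat.cast_nonneg _) _ hu.le
                exact_mod_cast Nat.sub_le n 1
  -- rpow identities
  have e2 : (n:ℝ)^(-u) * (n:ℝ)^u = 1 := by
    rw [← Real.rpow_add hn0]; simp
  have e1 : (n:ℝ)^(-u) * (δ*(n:ℝ))^u = δ^u := by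
    calc (n:ℝ)^(-u) * (δ*(n:ℝ))^u = (n:ℝ)^(-u) * (δ^u * (n:ℝ)^u) := by
          rw [Real.mul_rpow hδ0.le hn0.le]
      _ = δ^u * ((n:ℝ)^(-u) * (n:ℝ)^u) := by ring
      _ = δ^u := by rw [e2, mul_one]
  have e3 : (n:ℝ)^(-u) * (n:ℝ)^(u-1) = ((n:ℝ))⁻¹ := by
    rw [← Real.rpow_add hn0]
    have he : -u + (u-1) = (-1 : ℝ) := by ring
    rw [he, Real.rpow_neg_one]
  -- final estimate
  have hSn : A' * K * (S * ((n:ℝ))⁻¹) < ε/3 := by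
    have h := hN2 n hnN2
    rw [← hSdef, Real.dist_eq, sub_zero, abs_of_nonneg (div_nonneg hS0 hn0.le)] at h
    have h2 : S * ((n:ℝ))⁻¹ < ε / (3*A'*K) := by
      rw [← div_eq_mul_inv]; exact h
    calc A' * K * (S * ((n:ℝ))⁻¹) < A' * K * (ε / (3*A'*K)) := by
          apply mul_lt_mul_of_pos_left h2 (by positivity)
      _ = ε/3 := by field_simp
  have hεC : ε' * C = ε/3 := by
    rw [hε'def]; field_simp
  have h0u : 0 ≤ (n:ℝ)^(-u) := Real.rpow_nonneg hn0.le _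
  calc (n:ℝ)^(-u) * ∑ i ∈ Finset.Icc 1 (n-1), a i * (i:ℝ)^(u-1)
      = (n:ℝ)^(-u) * (∑ i ∈ Finset.Icc 1 m, a i * (i:ℝ)^(u-1)
        + ∑ i ∈ Finset.Ioc m (n-1), a i * (i:ℝ)^(u-1)) := by
        rw [hsplit, Finset.sum_union hdisj]
    _ ≤ (n:ℝ)^(-u) * (A' * (C * (δ*(n:ℝ))^u)
        + (ε' * (C * (n:ℝ)^u) + A' * K * (n:ℝ)^(u-1) * S)) :=
        mul_le_mul_of_nonneg_left (add_le_add hT1 hT2) h0u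
    _ = A' * C * ((n:ℝ)^(-u) * (δ*(n:ℝ))^u) + ε' * C * ((n:ℝ)^(-u) * (n:ℝ)^u)
        + A' * K * (S * ((n:ℝ)^(-u) * (n:ℝ)^(u-1))) := by ring
    _ = A' * C * δ^u + ε' * C + A' * K * (S * ((n:ℝ))⁻¹) := by
        rw [e1, e2, e3, mul_one]
    _ < ε := by
        rw [hεC]
        linarith
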